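/- Let $z\in C^1(S^1,\mathbb{R})$ with finite zero set, $\tau_z$ the inverse of $t_z(\tau)=\|z\|^{-2}\int_0^\tau z^2$, and $q(t)=z(\tau_z(t))^2$. Then $q$ is differentiable outside the zeroes of $q$ with $\dot q(t) = 2\|z\|^2 z'(\tau_z(t))/z(\tau_z(t))$, and the $L^2$-norms satisfy $\|\dot q\|^2 = 4\|z\|^2\|z'\|^2$ (assuming $\dot q\in L^2$). -/

import Mathlib

open MeasureTheory

/-- Let `z ∈ C¹(S¹,ℝ)` with finitely many zeroes, `τ_z` the inverse of
`t_z(τ) = ‖z‖⁻² ∫₀^τ z²`, and `q(t) = z(τ_z(t))²`. Then outside the zeroes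
of `q` one has `q̇(t) = 2‖z‖² z'(τ_z(t))/z(τ_z(t))`, and (assuming
`q̇ ∈ L²`) the `L²`-norms satisfy `‖q̇‖² = 4‖z‖²‖z'‖²`. -/
theorem stmt_15 (z τz : ℝ → ℝ)
    (hz : ContDiff ℝ 1 z) (hzper : Function.Periodic z 1)
    (hfin : {τ ∈ Set.Ico (0:ℝ) 1 | z τ = 0}.Finite)
    (hnorm : 0 < ∫ σ in (0:ℝ)..1, z σ ^ 2)
    (hτz : Continuous τz) (hτz0 : τz 0 = 0) (hτz1 : τz 1 = 1)
    (hinv : ∀ t, (∫ σ in (0:ℝ)..(τz t), z σ ^ 2) / (∫ σ in (0:ℝ)..1, z σ ^ 2)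
      = t)
    (hinv' : ∀ τ,
      τz ((∫ σ in (0:ℝ)..τ, z σ ^ 2) / (∫ σ in (0:ℝ)..1, z σ ^ 2)) = τ) :
    (∀ t, z (τz t) ≠ 0 →
      HasDerivAt (fun s => z (τz s) ^ 2)
        (2 * (∫ σ in (0:ℝ)..1, z σ ^ 2) * deriv z (τz t) / z (τz t)) t) ∧
    (IntegrableOn
        (fun t => (2 * (∫ σ in (0:ℝ)..1, z σ ^ 2) * deriv z (τz t)
          / z (τz t)) ^ 2) (Set.Ioc (0:ℝ) 1) →
      (∫ t in (0:ℝ)..1, (2 * (∫ σ in (0:ℝ)..1, z σ ^ 2) * deriv z (τz t)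
          / z (τz t)) ^ 2)
        = 4 * (∫ σ in (0:ℝ)..1, z σ ^ 2) * ∫ σ in (0:ℝ)..1, deriv z σ ^ 2) := by
  set I : ℝ := ∫ σ in (0:ℝ)..1, z σ ^ 2 with hIdef
  have hI : 0 < I := hnorm
  set tz : ℝ → ℝ := fun τ => (∫ σ in (0:ℝ)..τ, z σ ^ 2) / I with htzdef
  have hzc : Continuous z := hz.continuous
  have hz2c : Continuous fun σ => z σ ^ 2 := hzc.pow 2
  -- derivative of tz
  have hderiv : ∀ τ, HasDerivAt tz (z τ ^ 2 / I) τ := by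
    intro τ
    have h1 : HasDerivAt (fun u => ∫ σ in (0:ℝ)..u, z σ ^ 2) (z τ ^ 2) τ :=
      intervalIntegral.integral_hasDerivAt_right
        (hz2c.intervalIntegrable _ _)
        hz2c.aestronglyMeasurable.stronglyMeasurableAtFilter hz2c.continuousAt
    exact h1.div_const I
  have hzd : ∀ τ, HasDerivAt z (deriv z τ) τ := fun τ =>
    (hz.differentiable one_ne_zero τ).hasDerivAt
  have hleft : Function.LeftInverse τz tz := fun τ => hinv' τ
  have hinj : Function.Injective tz := hleft.injective
  -- monotonicity
  have hmono : Monotone tz := by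
    intro a b hab
    have hnn : 0 ≤ ∫ σ in a..b, z σ ^ 2 :=
      intervalIntegral.integral_nonneg hab (fun x _ => sq_nonneg _)
    have hadd : (∫ σ in (0:ℝ)..a, z σ ^ 2) + (∫ σ in a..b, z σ ^ 2) = ∫ σ in (0:ℝ)..b, z σ ^ 2 :=
      intervalIntegral.integral_add_adjacent_intervals
        (hz2c.intervalIntegrable _ _) (hz2c.intervalIntegrable _ _)
    have : (∫ σ in (0:ℝ)..a, z σ ^ 2) ≤ ∫ σ in (0:ℝ)..b, z σ ^ 2 := by linarith
    exact div_le_div_of_nonneg_right this hI.le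
  have hsm : StrictMono tz := hmono.strictMono_of_injective hinj
  have htz0 : tz 0 = 0 := by
    simp [htzdef]
  have htz1 : tz 1 = 1 := by
    have := hinv 1
    rw [hτz1] at this
    exact this
  -- Part 1
  have part1 : ∀ t, z (τz t) ≠ 0 →
      HasDerivAt (fun s => z (τz s) ^ 2)
        (2 * I * deriv z (τz t) / z (τz t)) t := by
    intro t hzt
    have hne : z (τz t) ^ 2 / I ≠ 0 := by
      have : z (τz t) ^ 2 ≠ 0 := pow_ne_zero _ hzt
      positivity
    have hτd : HasDerivAt τz (z (τz t) ^ 2 / I)⁻¹ t :=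
      HasDerivAt.of_local_left_inverse hτz.continuousAt (hderiv (τz t)) hne
        (Filter.Eventually.of_forall fun y => hinv y)
    have hcomp : HasDerivAt (fun s => z (τz s))
        (deriv z (τz t) * (z (τz t) ^ 2 / I)⁻¹) t :=
      (hzd (τz t)).comp t hτd
    have hpow := hcomp.pow 2
    convert hpow using 1
    · rfl
    · rfl
    · rfl
    field_simp
    ring
  refine ⟨part1, fun _ => ?_⟩
  -- Part 2 : change of variables
  have himage : tz '' Set.Ioc 0 1 = Set.Ioc (0:ℝ) 1 := by
    ext t
    constructor
    · rintro ⟨τ, ⟨h0, h1⟩, rfl⟩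
      exact ⟨htz0 ▸ hsm h0, htz1 ▸ hmono h1⟩
    · rintro ⟨h0, h1⟩
      have ht' : tz (τz t) = t := hinv t
      refine ⟨τz t, ⟨?_, ?_⟩, ht'⟩
      · have : tz 0 < tz (τz t) := by rw [htz0, ht']; exact h0
        exact hsm.lt_iff_lt.mp this
      · have : tz (τz t) ≤ tz 1 := by rw [htz1, ht']; exact h1
        exact hsm.le_iff_le.mp this
  have hchg :
      (∫ t in Set.Ioc (0:ℝ) 1, (2 * I * deriv z (τz t) / z (τz t)) ^ 2)
        = ∫ τ in Set.Ioc (0:ℝ) 1,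
            |z τ ^ 2 / I| • (2 * I * deriv z (τz (tz τ)) / z (τz (tz τ))) ^ 2 := by
    conv_lhs => rw [← himage]
    exact integral_image_eq_integral_abs_deriv_smul measurableSet_Ioc
      (fun τ _ => (hderiv τ).hasDerivWithinAt) (hinj.injOn) _
  have hfin' : ({τ ∈ Set.Ioc (0:ℝ) 1 | z τ = 0} : Set ℝ).Finite := by
    apply Set.Finite.subset (hfin.union (Set.finite_singleton 1))
    rintro τ ⟨⟨h0, h1⟩, hzτ⟩
    rcases lt_or_eq_of_le h1 with h | h
    · exact Or.inl ⟨⟨le_of_lt h0, h⟩, hzτ⟩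
    · exact Or.inr h
  have hae : ∀ᵐ τ, τ ∈ Set.Ioc (0:ℝ) 1 →
      |z τ ^ 2 / I| • (2 * I * deriv z (τz (tz τ)) / z (τz (tz τ))) ^ 2
        = 4 * I * deriv z τ ^ 2 := by
    have hZ : (volume : Measure ℝ) {τ ∈ Set.Ioc (0:ℝ) 1 | z τ = 0} = 0 :=
      hfin'.measure_zero _
    filter_upwards [measure_eq_zero_iff_ae_notMem.mp hZ] with τ hτ hmem
    have hzτ : z τ ≠ 0 := fun h => hτ ⟨hmem, h⟩
    rw [hleft τ]
    rw [abs_of_nonneg (by positivity : (0:ℝ) ≤ z τ ^ 2 / I), smul_eq_mul]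
    field_simp
    ring
  have h2 : (∫ τ in Set.Ioc (0:ℝ) 1,
      |z τ ^ 2 / I| • (2 * I * deriv z (τz (tz τ)) / z (τz (tz τ))) ^ 2)
        = ∫ τ in Set.Ioc (0:ℝ) 1, 4 * I * deriv z τ ^ 2 :=
    setIntegral_congr_ae measurableSet_Ioc hae
  rw [intervalIntegral.integral_of_le (by norm_num : (0:ℝ) ≤ 1), hchg, h2,
    intervalIntegral.integral_of_le (by norm_num : (0:ℝ) ≤ 1)]
  rw [← integral_const_mul]
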